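/- Let n, m ≥ 1 and let Φ₁ ≤ Φ₂ ≤ ⋯ ≤ Φₙ be a multichain of noncrossing partitions of {1,…,m} (each Φⱼ noncrossing and every block of Φⱼ contained in a block of Φ_{j+1}). Define a pair partition π of {0,…,2nm−1} as follows: for each 1 ≤ j ≤ n and each block V = {k₁ < k₂ < ⋯ < k_r} of Φⱼ, π contains the pairs {c(k₁,j), c∗(k_r,j)} and {c(k_{i+1},j), c∗(k_i,j)} for 1 ≤ i ≤ r−1. Then π ∈ NC₂*(n,m), i.e. π is a noncrossing pair partition each of whose blocks contains exactly one c-position and one c∗-position. -/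
import Mathlib


/-- A partition (equivalence relation) of `Fin N` is noncrossing if there are no
`p < q < p' < q'` with `p ∼ p'`, `q ∼ q'` but `p ≁ q`. -/
def IsNoncrossing {N : ℕ} (π : Setoid (Fin N)) : Prop :=
  ¬ ∃ p q p' q' : Fin N, p < q ∧ q < p' ∧ p' < q' ∧ π.r p p' ∧ π.r q q' ∧ ¬ π.r p q

/-- A pair partition: every element lies in a block of exactly two elements. -/
def IsPairPartition {N : ℕ} (π : Setoid (Fin N)) : Prop :=
  ∀ p : Fin N, ∃! q : Fin N, q ≠ p ∧ π.r p q

/-- Position `p` (in `{0,…,2nm−1}`) is a `c`-position if `⌊p/n⌋` is even. -/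
def IsCPos (n p : ℕ) : Prop := (p / n) % 2 = 0

/-- The label of position `p`: `n − (p mod n)` on `c`-positions and
`(p mod n) + 1` on `c∗`-positions. -/
def posLabel (n p : ℕ) : ℕ := if (p / n) % 2 = 0 then n - p % n else p % n + 1

/-- `π ∈ NC₂*(n,m)`: a noncrossing pair partition of `{0,…,2nm−1}` each of whose
blocks contains exactly one `c`-position and one `c∗`-position. -/
def IsStarPairing (n m : ℕ) (π : Setoid (Fin (2 * n * m))) : Prop :=
  IsNoncrossing π ∧ IsPairPartition π ∧
    ∀ p q : Fin (2 * n * m), p ≠ q → π.r p q → (IsCPos n p.val ↔ ¬ IsCPos n q.val)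

/-- `c(k,j)`: for `1 ≤ k ≤ m`, `1 ≤ j ≤ n`, the unique `c`-position with
`⌊·/n⌋ = 2(k−1)` and label `j`, namely `2(k−1)n + (n−j)`. -/
def cIdx (n m : ℕ) (h : 0 < 2 * n * m) (k j : ℕ) : Fin (2 * n * m) :=
  ⟨(2 * (k - 1) * n + (n - j)) % (2 * n * m), Nat.mod_lt _ h⟩

/-- `c∗(k,j)`: for `1 ≤ k ≤ m`, `1 ≤ j ≤ n`, the unique `c∗`-position with
`⌊·/n⌋ = 2k−1` and label `j`, namely `(2k−1)n + (j−1)`. -/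
def cstarIdx (n m : ℕ) (h : 0 < 2 * n * m) (k j : ℕ) : Fin (2 * n * m) :=
  ⟨((2 * k - 1) * n + (j - 1)) % (2 * n * m), Nat.mod_lt _ h⟩

/-- `k'` is the cyclic predecessor of `k` in its block of `Φ`: either `k'` is the
largest element of the block strictly below `k`, or `k` is the minimum of its block
and `k'` is its maximum. For a block `{k₁ < ⋯ < k_r}` this sends `k₁ ↦ k_r` and
`k_{i+1} ↦ k_i`. -/
def CycPred {m : ℕ} (Φ : Setoid (Fin m)) (k k' : Fin m) : Prop :=
  Φ.r k k' ∧
    ((k' < k ∧ ∀ l, Φ.r k l → l < k → l ≤ k') ∨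
      ((∀ l, Φ.r k l → k ≤ l) ∧ (∀ l, Φ.r k l → l ≤ k')))

/-- The pairs of the pairing `Q(Φ₁,…,Φₙ)`: for each `j` and each block
`V = {k₁ < ⋯ < k_r}` of `Φⱼ`, the pairs `{c(k₁,j), c∗(k_r,j)}` and
`{c(k_{i+1},j), c∗(k_i,j)}`. Here `j : Fin n` stands for label `j+1` and
`k : Fin m` for the element `k+1` of `{1,…,m}`. -/
def QRel (n m : ℕ) (h : 0 < 2 * n * m) (Φ : Fin n → Setoid (Fin m)) :
    Fin (2 * n * m) → Fin (2 * n * m) → Prop :=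
  fun p q => ∃ (j : Fin n) (k k' : Fin m), CycPred (Φ j) k k' ∧
    p = cIdx n m h (k.val + 1) (j.val + 1) ∧ q = cstarIdx n m h (k'.val + 1) (j.val + 1)

/-- The pair partition `Q(Φ₁,…,Φₙ)` generated by the pairs of `QRel`. -/
def QMap (n m : ℕ) (h : 0 < 2 * n * m) (Φ : Fin n → Setoid (Fin m)) :
    Setoid (Fin (2 * n * m)) :=
  Relation.EqvGen.setoid (QRel n m h Φ)



theorem myAddMulLt {n a1 a2 r1 r2 : ℕ} (h1 : r1 < n) (h2 : r2 < n) :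
    a1 * n + r1 < a2 * n + r2 ↔ a1 < a2 ∨ (a1 = a2 ∧ r1 < r2) := by
  constructor
  · intro h
    rcases Nat.lt_trichotomy a1 a2 with h' | h' | h'
    · exact Or.inl h'
    · subst h'; exact Or.inr ⟨rfl, by omega⟩
    · exfalso
      have hb : (a2+1)*n ≤ a1*n := Nat.mul_le_mul_right n h'
      have : (a2+1)*n = a2*n + n := by ring
      omega
  · rintro (h | ⟨rfl, h⟩)
    · have hb : (a1+1)*n ≤ a2*n := Nat.mul_le_mul_right n h
      have : (a1+1)*n = a1*n + n := by ring
      omega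
    · omega

theorem myAddMulEq {n a1 a2 r1 r2 : ℕ} (h1 : r1 < n) (h2 : r2 < n)
    (h : a1 * n + r1 = a2 * n + r2) : a1 = a2 ∧ r1 = r2 := by
  have t1 := myAddMulLt h1 h2 (n := n) (a1 := a1) (a2 := a2) (r1 := r1) (r2 := r2)
  have t2 := myAddMulLt h2 h1 (n := n) (a1 := a2) (a2 := a1) (r1 := r2) (r2 := r1)
  omega

def cval (n t J : ℕ) : ℕ := 2 * t * n + (n - J)
def sval (n t J : ℕ) : ℕ := (2 * t + 1) * n + (J - 1)

theorem cval_eq (n t J : ℕ) : cval n t J = (2*t) * n + (n - J) := by unfold cval; ring_nf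

section decode
variable {n t1 t2 J1 J2 : ℕ} (hJ1 : 1 ≤ J1) (h1n : J1 ≤ n) (hJ2 : 1 ≤ J2) (h2n : J2 ≤ n)
include hJ1 h1n hJ2 h2n

theorem dec_cc (h : cval n t1 J1 < cval n t2 J2) : t1 < t2 ∨ (t1 = t2 ∧ J2 < J1) := by
  rw [cval_eq, cval_eq] at h
  have := (myAddMulLt (by omega) (by omega)).mp h
  omega

theorem dec_ss (h : sval n t1 J1 < sval n t2 J2) : t1 < t2 ∨ (t1 = t2 ∧ J1 < J2) := by
  have := (myAddMulLt (n := n) (by omega) (by omega)).mp h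
  omega

theorem dec_cs (h : cval n t1 J1 < sval n t2 J2) : t1 ≤ t2 := by
  rw [cval_eq] at h
  have := (myAddMulLt (n := n) (by omega) (by omega)).mp h
  omega

theorem dec_sc (h : sval n t1 J1 < cval n t2 J2) : t1 < t2 := by
  rw [cval_eq] at h
  have := (myAddMulLt (n := n) (by omega) (by omega)).mp h
  omega

theorem dec_cc_eq (h : cval n t1 J1 = cval n t2 J2) : t1 = t2 ∧ J1 = J2 := by
  rw [cval_eq, cval_eq] at h
  have := myAddMulEq (by omega) (by omega) h
  omega

theorem dec_ss_eq (h : sval n t1 J1 = sval n t2 J2) : t1 = t2 ∧ J1 = J2 := by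
  have := myAddMulEq (n := n) (by omega) (by omega) h
  omega

theorem dec_cs_ne : cval n t1 J1 ≠ sval n t2 J2 := by
  intro h
  rw [cval_eq] at h
  have := myAddMulEq (n := n) (by omega) (by omega) h
  omega
end decode

theorem myCsNe {n t1 t2 J1 J2 : ℕ} (h : cval n t1 J1 = sval n t2 J2)
    (hJ1 : 1 ≤ J1) (h1n : J1 ≤ n) (hJ2 : 1 ≤ J2) (h2n : J2 ≤ n) : False :=
  dec_cs_ne hJ1 h1n hJ2 h2n h

theorem myDivHelper {a r n : ℕ} (hn : 0 < n) (hr : r < n) : (a * n + r) / n = a := by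
  have e : a * n + r = r + n * a := by ring
  rw [e, Nat.add_mul_div_left _ _ hn, Nat.div_eq_of_lt hr, Nat.zero_add]

theorem isCPos_cval {n t J : ℕ} (hJ1 : 1 ≤ J) (hJn : J ≤ n) : IsCPos n (cval n t J) := by
  have hn : 0 < n := by omega
  have : cval n t J / n = 2 * t := by rw [cval_eq]; exact myDivHelper hn (by omega)
  unfold IsCPos
  omega

theorem not_isCPos_sval {n t J : ℕ} (hJ1 : 1 ≤ J) (hJn : J ≤ n) : ¬ IsCPos n (sval n t J) := by
  have hn : 0 < n := by omega
  have : sval n t J / n = 2 * t + 1 := myDivHelper hn (by omega)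
  unfold IsCPos
  omega

section idx
variable {n m : ℕ} (h2 : 0 < 2 * n * m)

theorem cIdx_val {k j : ℕ} (hk : k < m) (hj : j < n) :
    (cIdx n m h2 (k+1) (j+1)).val = cval n k (j+1) := by
  show (2 * (k+1-1) * n + (n - (j+1))) % (2*n*m) = _
  have e : k + 1 - 1 = k := by omega
  rw [e]
  apply Nat.mod_eq_of_lt
  have h1 : (2*k+1)*n ≤ (2*m)*n := Nat.mul_le_mul_right n (by omega)
  have e2 : (2*k+1)*n = 2*k*n + n := by ring
  have e3 : (2*m)*n = 2*n*m := by ring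
  omega

theorem cstarIdx_val {k j : ℕ} (hk : k < m) (hj : j < n) :
    (cstarIdx n m h2 (k+1) (j+1)).val = sval n k (j+1) := by
  show ((2 * (k+1) - 1) * n + (j+1-1)) % (2*n*m) = _
  have e : 2 * (k+1) - 1 = 2*k+1 := by omega
  rw [e]
  apply Nat.mod_eq_of_lt
  have h1 : (2*k+2)*n ≤ (2*m)*n := Nat.mul_le_mul_right n (by omega)
  have e2 : (2*k+2)*n = (2*k+1)*n + n := by ring
  have e3 : (2*m)*n = 2*n*m := by ring
  show (2*k+1)*n + (j+1-1) < 2*n*m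
  omega
end idx

section cyc
variable {m : ℕ} {σ : Setoid (Fin m)}

theorem nc_rel {N : ℕ} {τ : Setoid (Fin N)} (h : IsNoncrossing τ) {p q p' q' : Fin N}
    (h1 : p < q) (h2 : q < p') (h3 : p' < q') (hpp : τ.r p p') (hqq : τ.r q q') :
    τ.r p q := by
  by_contra hc
  exact h ⟨p, q, p', q', h1, h2, h3, hpp, hqq, hc⟩

theorem cycPred_exists (σ : Setoid (Fin m)) (k : Fin m) : ∃ k', CycPred σ k k' := by
  classical
  by_cases hS : (Finset.univ.filter (fun l => σ.r k l ∧ l < k)).Nonempty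
  · refine ⟨(Finset.univ.filter (fun l => σ.r k l ∧ l < k)).max' hS, ?_⟩
    have hmem := (Finset.univ.filter (fun l => σ.r k l ∧ l < k)).max'_mem hS
    simp only [Finset.mem_filter, Finset.mem_univ, true_and] at hmem
    refine ⟨hmem.1, Or.inl ⟨hmem.2, fun l hl hlk => ?_⟩⟩
    exact Finset.le_max' _ l (by simp [hl, hlk])
  · have hT : (Finset.univ.filter (fun l => σ.r k l)).Nonempty :=
      ⟨k, by simp [σ.iseqv.refl k]⟩
    refine ⟨(Finset.univ.filter (fun l => σ.r k l)).max' hT, ?_⟩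
    have hmem := (Finset.univ.filter (fun l => σ.r k l)).max'_mem hT
    simp only [Finset.mem_filter, Finset.mem_univ, true_and] at hmem
    refine ⟨hmem, Or.inr ⟨fun l hl => ?_, fun l hl => Finset.le_max' _ l (by simp [hl])⟩⟩
    by_contra hc
    exact hS ⟨l, by simp [hl]; omega⟩

theorem cycPred_surj (σ : Setoid (Fin m)) (k' : Fin m) : ∃ k, CycPred σ k k' := by
  classical
  by_cases hS : (Finset.univ.filter (fun l => σ.r k' l ∧ k' < l)).Nonempty
  · set S := Finset.univ.filter (fun l => σ.r k' l ∧ k' < l) with hSdef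
    refine ⟨S.min' hS, ?_⟩
    have hmem := S.min'_mem hS
    simp only [hSdef, Finset.mem_filter, Finset.mem_univ, true_and] at hmem
    refine ⟨σ.iseqv.symm hmem.1, Or.inl ⟨hmem.2, fun l hl hlk => ?_⟩⟩
    by_contra hc
    push_neg at hc
    have hlS : l ∈ S := by
      simp only [hSdef, Finset.mem_filter, Finset.mem_univ, true_and]
      exact ⟨σ.iseqv.trans hmem.1 hl, hc⟩
    exact absurd (S.min'_le l hlS) (by omega)
  · set T := Finset.univ.filter (fun l => σ.r k' l) with hTdef
    have hT : T.Nonempty := ⟨k', by simp [hTdef, σ.iseqv.refl k']⟩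
    refine ⟨T.min' hT, ?_⟩
    have hmem := T.min'_mem hT
    simp only [hTdef, Finset.mem_filter, Finset.mem_univ, true_and] at hmem
    refine ⟨σ.iseqv.symm hmem, Or.inr ⟨fun l hl => ?_, fun l hl => ?_⟩⟩
    · exact T.min'_le l (by simp [hTdef]; exact σ.iseqv.trans hmem hl)
    · by_contra hc
      exact hS ⟨l, by simp [hTdef]; exact ⟨σ.iseqv.trans hmem hl, by omega⟩⟩

theorem cycPred_unique {k k' k'' : Fin m} (h1 : CycPred σ k k') (h2 : CycPred σ k k'') :
    k' = k'' := by
  obtain ⟨hr1, hc1⟩ := h1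
  obtain ⟨hr2, hc2⟩ := h2
  rcases hc1 with ⟨hlt1, hmax1⟩ | ⟨hmin1, hmax1⟩ <;>
    rcases hc2 with ⟨hlt2, hmax2⟩ | ⟨hmin2, hmax2⟩
  · exact le_antisymm (hmax2 k' hr1 hlt1) (hmax1 k'' hr2 hlt2)
  · exact absurd (hmin2 k' hr1) (by omega)
  · exact absurd (hmin1 k'' hr2) (by omega)
  · exact le_antisymm (hmax2 k' hr1) (hmax1 k'' hr2)

theorem cycPred_inj {k1 k2 k' : Fin m} (h1 : CycPred σ k1 k') (h2 : CycPred σ k2 k') :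
    k1 = k2 := by
  obtain ⟨hr1, hc1⟩ := h1
  obtain ⟨hr2, hc2⟩ := h2
  have h12 : σ.r k1 k2 := σ.iseqv.trans hr1 (σ.iseqv.symm hr2)
  rcases hc1 with ⟨hlt1, hmax1⟩ | ⟨hmin1, hmax1⟩ <;>
    rcases hc2 with ⟨hlt2, hmax2⟩ | ⟨hmin2, hmax2⟩
  · rcases Nat.lt_trichotomy k1.val k2.val with h | h | h
    · have := hmax2 k1 (σ.iseqv.symm h12) (by exact Fin.lt_def.mpr h)
      exact absurd this (by omega)
    · exact Fin.ext h
    · have := hmax1 k2 h12 (by exact Fin.lt_def.mpr h)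
      exact absurd this (by omega)
  · have := hmin2 k1 (σ.iseqv.symm h12)
    have := hmax2 k1 (σ.iseqv.symm h12)
    -- hmax2 : k1 ≤ k', hlt1 : k' < k1
    exact absurd ‹k1 ≤ k'› (by omega)
  · have := hmax1 k2 h12
    exact absurd ‹k2 ≤ k'› (by omega)
  · exact le_antisymm (hmin1 k2 h12) (hmin2 k1 (σ.iseqv.symm h12))

end cyc


section core
variable {m : ℕ} {τ : Setoid (Fin m)} {b2 a2 x y : Fin m}

theorem predL (hNC : IsNoncrossing τ) (hrel2 : τ.r b2 a2)
    (hpred2 : ∀ l, τ.r b2 l → l < b2 → l ≤ a2) (hxy : τ.r x y)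
    (h1 : x ≤ a2) (h2 : a2 < y) (h3 : y < b2) : False := by
  have hby : τ.r b2 y := by
    rcases eq_or_lt_of_le h1 with rfl | hlt
    · exact τ.iseqv.trans hrel2 hxy
    · have hxa : τ.r x a2 := nc_rel hNC hlt h2 h3 hxy (τ.iseqv.symm hrel2)
      exact τ.iseqv.trans hrel2 (τ.iseqv.trans (τ.iseqv.symm hxa) hxy)
  exact absurd (hpred2 y hby h3) (not_le.mpr h2)

theorem predR (hNC : IsNoncrossing τ) (hrel2 : τ.r b2 a2)
    (hpred2 : ∀ l, τ.r b2 l → l < b2 → l ≤ a2) (hxy : τ.r x y)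
    (h1 : a2 < x) (h2 : x < b2) (h3 : b2 ≤ y) : False := by
  have hbx : τ.r b2 x := by
    rcases eq_or_lt_of_le h3 with rfl | hlt
    · exact τ.iseqv.symm hxy
    · have := nc_rel hNC h1 h2 hlt (τ.iseqv.symm hrel2) hxy
      exact τ.iseqv.trans hrel2 this
  exact absurd (hpred2 x hbx h2) (not_le.mpr h1)

theorem minC (hNC : IsNoncrossing τ) (hrel2 : τ.r b2 a2)
    (hmin2 : ∀ l, τ.r b2 l → b2 ≤ l) (hxy : τ.r x y)
    (h1 : x < b2) (h2 : b2 ≤ y) (h3 : y ≤ a2) : False := by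
  have hbx : τ.r b2 x := by
    rcases eq_or_lt_of_le h2 with rfl | hlt
    · exact τ.iseqv.symm hxy
    · rcases eq_or_lt_of_le h3 with rfl | hlt'
      · exact τ.iseqv.trans hrel2 (τ.iseqv.symm hxy)
      · exact τ.iseqv.symm (nc_rel hNC h1 hlt hlt' hxy hrel2)
  exact absurd (hmin2 x hbx) (not_le.mpr h1)

theorem maxC (hNC : IsNoncrossing τ) (hrel2 : τ.r b2 a2)
    (hmax2 : ∀ l, τ.r b2 l → l ≤ a2) (hxy : τ.r x y)
    (h1 : b2 ≤ x) (h2 : x ≤ a2) (h3 : a2 < y) : False := by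
  have hby : τ.r b2 y := by
    rcases eq_or_lt_of_le h1 with rfl | hlt
    · exact hxy
    · rcases eq_or_lt_of_le h2 with rfl | hlt'
      · exact τ.iseqv.trans hrel2 hxy
      · exact τ.iseqv.trans (nc_rel hNC hlt hlt' h3 hrel2 hxy) hxy
  exact absurd (hmax2 y hby) (not_le.mpr h3)

end core

theorem eqvGen_matching {α : Type*} {r : α → α → Prop}
    (h1 : ∀ a b c, r a b → r a c → b = c)
    (h2 : ∀ a b c, r a c → r b c → a = b)
    (h3 : ∀ a b c, r a b → r b c → False) :
    ∀ a b, Relation.EqvGen r a b → a = b ∨ r a b ∨ r b a := by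
  intro a b h
  induction h with
  | rel x y hxy => exact Or.inr (Or.inl hxy)
  | refl x => exact Or.inl rfl
  | symm x y _ ih => tauto
  | trans x y z _ _ ih1 ih2 =>
    rcases ih1 with rfl | hxy | hyx
    · exact ih2
    · rcases ih2 with rfl | hyz | hzy
      · exact Or.inr (Or.inl hxy)
      · exact absurd (h3 _ _ _ hxy hyz) (by simp)
      · exact Or.inl (h2 _ _ _ hxy hzy)
    · rcases ih2 with rfl | hyz | hzy
      · exact Or.inr (Or.inr hyx)
      · exact Or.inl (h1 _ _ _ hyx hyz)
      · exact absurd (h3 _ _ _ hzy hyx) (by simp)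


section qlayer
variable {n m : ℕ} {h2 : 0 < 2 * n * m} {Φ : Fin n → Setoid (Fin m)}

theorem qrel_val {p q : Fin (2*n*m)} (h : QRel n m h2 Φ p q) :
    ∃ (j : Fin n) (k k' : Fin m), CycPred (Φ j) k k' ∧
      p.val = cval n k.val (j.val+1) ∧ q.val = sval n k'.val (j.val+1) := by
  obtain ⟨j, k, k', hc, hp, hq⟩ := h
  exact ⟨j, k, k', hc, by rw [hp]; exact cIdx_val h2 k.isLt j.isLt,
    by rw [hq]; exact cstarIdx_val h2 k'.isLt j.isLt⟩

theorem qrel_right_unique {p q q' : Fin (2*n*m)}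
    (ha : QRel n m h2 Φ p q) (hb : QRel n m h2 Φ p q') : q = q' := by
  obtain ⟨j, k, k', hc, hp, hq⟩ := ha
  obtain ⟨j2, k2, k2', hc2, hp2, hq2⟩ := hb
  have hv : cval n k.val (j.val+1) = cval n k2.val (j2.val+1) := by
    rw [← cIdx_val h2 k.isLt j.isLt, ← cIdx_val h2 k2.isLt j2.isLt, ← hp, ← hp2]
  have := dec_cc_eq (by omega) (by exact j.isLt) (by omega) (by exact j2.isLt) hv
  have hk : k = k2 := Fin.ext this.1
  have hj : j = j2 := Fin.ext (by omega)
  subst hk; subst hj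
  have := cycPred_unique hc hc2
  subst this
  rw [hq, hq2]

theorem qrel_left_unique {p p' q : Fin (2*n*m)}
    (ha : QRel n m h2 Φ p q) (hb : QRel n m h2 Φ p' q) : p = p' := by
  obtain ⟨j, k, k', hc, hp, hq⟩ := ha
  obtain ⟨j2, k2, k2', hc2, hp2, hq2⟩ := hb
  have hv : sval n k'.val (j.val+1) = sval n k2'.val (j2.val+1) := by
    rw [← cstarIdx_val h2 k'.isLt j.isLt, ← cstarIdx_val h2 k2'.isLt j2.isLt, ← hq, ← hq2]
  have := dec_ss_eq (by omega) (by exact j.isLt) (by omega) (by exact j2.isLt) hv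
  have hk : k' = k2' := Fin.ext this.1
  have hj : j = j2 := Fin.ext (by omega)
  subst hk; subst hj
  have := cycPred_inj hc hc2
  subst this
  rw [hp, hp2]

theorem qrel_no_chain {p q s : Fin (2*n*m)}
    (ha : QRel n m h2 Φ p q) (hb : QRel n m h2 Φ q s) : False := by
  obtain ⟨j, k, k', hc, hp, hq⟩ := ha
  obtain ⟨j2, k2, k2', hc2, hp2, hq2⟩ := hb
  have hv : cval n k2.val (j2.val+1) = sval n k'.val (j.val+1) := by
    rw [← cIdx_val h2 k2.isLt j2.isLt, ← cstarIdx_val h2 k'.isLt j.isLt, ← hp2, ← hq]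
  exact dec_cs_ne (by omega) (by exact j2.isLt) (by omega) (by exact j.isLt) hv

theorem qmap_cases {p q : Fin (2*n*m)} (h : (QMap n m h2 Φ).r p q) :
    p = q ∨ QRel n m h2 Φ p q ∨ QRel n m h2 Φ q p := by
  have h' : Relation.EqvGen (QRel n m h2 Φ) p q := h
  exact eqvGen_matching (r := QRel n m h2 Φ)
    (fun _ _ _ ha hb => qrel_right_unique ha hb)
    (fun _ _ _ ha hb => qrel_left_unique ha hb)
    (fun _ _ _ ha hb => qrel_no_chain ha hb) p q h'

end qlayer

section main
variable {n m : ℕ} {h2 : 0 < 2 * n * m} {Φ : Fin n → Setoid (Fin m)}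

theorem core {σ τ : Setoid (Fin m)} (hστ : ∀ a b, σ.r a b → τ.r a b)
    (hNC : IsNoncrossing τ) (J1 J2 : ℕ) (hJ1 : 1 ≤ J1) (h1n : J1 ≤ n)
    (hJ2 : 1 ≤ J2) (h2n : J2 ≤ n) (hJ : J1 ≤ J2)
    {b1 a1 b2 a2 : Fin m} (hr1 : σ.r b1 a1) (hr2 : τ.r b2 a2)
    {L1 R1 L2 R2 : ℕ}
    (i1 : ((∀ l, σ.r b1 l → b1 ≤ l) ∧ (∀ l, σ.r b1 l → l ≤ a1) ∧
            L1 = cval n b1.val J1 ∧ R1 = sval n a1.val J1) ∨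
          ((∀ l, σ.r b1 l → l < b1 → l ≤ a1) ∧
            L1 = sval n a1.val J1 ∧ R1 = cval n b1.val J1))
    (i2 : ((∀ l, τ.r b2 l → b2 ≤ l) ∧ (∀ l, τ.r b2 l → l ≤ a2) ∧
            L2 = cval n b2.val J2 ∧ R2 = sval n a2.val J2) ∨
          ((∀ l, τ.r b2 l → l < b2 → l ≤ a2) ∧
            L2 = sval n a2.val J2 ∧ R2 = cval n b2.val J2))
    (ord : (L1 < L2 ∧ L2 < R1 ∧ R1 < R2) ∨ (L2 < L1 ∧ L1 < R2 ∧ R2 < R1)) :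
    False := by
  have hτr1 : τ.r b1 a1 := hστ _ _ hr1
  rcases i1 with ⟨min1, max1, e1, e2⟩ | ⟨pred1, e1, e2⟩ <;>
    rcases i2 with ⟨min2, max2, f1, f2⟩ | ⟨pred2, f1, f2⟩ <;>
      subst e1 e2 f1 f2 <;>
        rcases ord with ⟨o1, o2, o3⟩ | ⟨o1, o2, o3⟩
  -- BB α
  · have d1 := dec_cc hJ1 h1n hJ2 h2n o1
    have d2 := dec_cs hJ2 h2n hJ1 h1n o2
    have d3 := dec_ss hJ1 h1n hJ2 h2n o3
    exact minC hNC hr2 min2 hτr1 (Fin.lt_def.mpr (by omega))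
      (Fin.le_def.mpr (by omega)) (Fin.le_def.mpr (by omega))
  -- BB β
  · have d1 := dec_cc hJ2 h2n hJ1 h1n o1
    have d2 := dec_cs hJ1 h1n hJ2 h2n o2
    have d3 := dec_ss hJ2 h2n hJ1 h1n o3
    exact maxC hNC hr2 max2 hτr1 (Fin.le_def.mpr (by omega))
      (Fin.le_def.mpr (by omega)) (Fin.lt_def.mpr (by omega))
  -- BA α
  · have d1 := dec_cs hJ1 h1n hJ2 h2n o1
    have d2 := dec_ss hJ2 h2n hJ1 h1n o2
    have d3 := dec_sc hJ1 h1n hJ2 h2n o3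
    exact predL hNC hr2 pred2 hτr1 (Fin.le_def.mpr (by omega))
      (Fin.lt_def.mpr (by omega)) (Fin.lt_def.mpr (by omega))
  -- BA β
  · have d1 := dec_sc hJ2 h2n hJ1 h1n o1
    have d2 := dec_cc hJ1 h1n hJ2 h2n o2
    have d3 := dec_cs hJ2 h2n hJ1 h1n o3
    exact predR hNC hr2 pred2 hτr1 (Fin.lt_def.mpr (by omega))
      (Fin.lt_def.mpr (by omega)) (Fin.le_def.mpr (by omega))
  -- AB α
  · have d1 := dec_sc hJ1 h1n hJ2 h2n o1
    have d2 := dec_cc hJ2 h2n hJ1 h1n o2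
    have d3 := dec_cs hJ1 h1n hJ2 h2n o3
    exact minC hNC hr2 min2 (τ.iseqv.symm hτr1) (Fin.lt_def.mpr (by omega))
      (Fin.le_def.mpr (by omega)) (Fin.le_def.mpr (by omega))
  -- AB β
  · have d1 := dec_cs hJ2 h2n hJ1 h1n o1
    have d2 := dec_ss hJ1 h1n hJ2 h2n o2
    have d3 := dec_sc hJ2 h2n hJ1 h1n o3
    exact maxC hNC hr2 max2 (τ.iseqv.symm hτr1) (Fin.le_def.mpr (by omega))
      (Fin.le_def.mpr (by omega)) (Fin.lt_def.mpr (by omega))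
  -- AA α
  · have d1 := dec_ss hJ1 h1n hJ2 h2n o1
    have d2 := dec_sc hJ2 h2n hJ1 h1n o2
    have d3 := dec_cc hJ1 h1n hJ2 h2n o3
    exact predL hNC hr2 pred2 (τ.iseqv.symm hτr1) (Fin.le_def.mpr (by omega))
      (Fin.lt_def.mpr (by omega)) (Fin.lt_def.mpr (by omega))
  -- AA β
  · have d1 := dec_ss hJ2 h2n hJ1 h1n o1
    have d2 := dec_sc hJ1 h1n hJ2 h2n o2
    have d3 := dec_cc hJ2 h2n hJ1 h1n o3
    exact predR hNC hr2 pred2 (τ.iseqv.symm hτr1) (Fin.lt_def.mpr (by omega))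
      (Fin.lt_def.mpr (by omega)) (Fin.le_def.mpr (by omega))

theorem arc_extract {p p' : Fin (2*n*m)} (hlt : p < p')
    (h : QRel n m h2 Φ p p' ∨ QRel n m h2 Φ p' p) :
    ∃ (j : Fin n) (b a : Fin m), (Φ j).r b a ∧
      (((∀ l, (Φ j).r b l → b ≤ l) ∧ (∀ l, (Φ j).r b l → l ≤ a) ∧
          p.val = cval n b.val (j.val+1) ∧ p'.val = sval n a.val (j.val+1)) ∨
       ((∀ l, (Φ j).r b l → l < b → l ≤ a) ∧
          p.val = sval n a.val (j.val+1) ∧ p'.val = cval n b.val (j.val+1))) := by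
  rcases h with h | h
  · obtain ⟨j, k, k', hc, hp, hq⟩ := qrel_val h
    have hv : cval n k.val (j.val+1) < sval n k'.val (j.val+1) := by
      rw [← hp, ← hq]; exact Fin.lt_def.mp hlt
    have hk : k.val ≤ k'.val := dec_cs (by omega) j.isLt (by omega) j.isLt hv
    rcases hc.2 with ⟨hl, _⟩ | hmm
    · exact absurd (Fin.lt_def.mp hl) (by omega)
    · exact ⟨j, k, k', hc.1, Or.inl ⟨hmm.1, hmm.2, hp, hq⟩⟩
  · obtain ⟨j, k, k', hc, hcv, hsv⟩ := qrel_val h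
    have hv : sval n k'.val (j.val+1) < cval n k.val (j.val+1) := by
      rw [← hsv, ← hcv]; exact Fin.lt_def.mp hlt
    have hk : k'.val < k.val := dec_sc (by omega) j.isLt (by omega) j.isLt hv
    rcases hc.2 with ⟨_, hpred⟩ | ⟨hmin, _⟩
    · exact ⟨j, k, k', hc.1, Or.inr ⟨hpred, hsv, hcv⟩⟩
    · exact absurd (Fin.le_def.mp (hmin k' hc.1)) (by omega)

theorem qmap_noncrossing (hNC : ∀ j, IsNoncrossing (Φ j)) (hchain : Monotone Φ) :
    IsNoncrossing (QMap n m h2 Φ) := by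
  rintro ⟨p, q, p', q', hpq, hqp', hp'q', hpp', hqq', -⟩
  have hne1 : p ≠ p' := ne_of_lt (hpq.trans hqp')
  have hne2 : q ≠ q' := ne_of_lt (hqp'.trans hp'q')
  have c1 := (qmap_cases hpp').resolve_left hne1
  have c2 := (qmap_cases hqq').resolve_left hne2
  obtain ⟨j1, b1, a1, hr1, i1⟩ := arc_extract (hpq.trans hqp') c1
  obtain ⟨j2, b2, a2, hr2, i2⟩ := arc_extract (hqp'.trans hp'q') c2
  rcases le_or_gt j1.val j2.val with hj | hj
  · exact core (σ := Φ j1) (τ := Φ j2)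
      (fun a b h => hchain (Fin.le_def.mpr hj) h) (hNC j2)
      (j1.val+1) (j2.val+1) (by omega) j1.isLt (by omega) j2.isLt (by omega)
      hr1 hr2 i1 i2
      (Or.inl ⟨Fin.lt_def.mp hpq, Fin.lt_def.mp hqp', Fin.lt_def.mp hp'q'⟩)
  · exact core (σ := Φ j2) (τ := Φ j1)
      (fun a b h => hchain (Fin.le_def.mpr hj.le) h) (hNC j1)
      (j2.val+1) (j1.val+1) (by omega) j2.isLt (by omega) j1.isLt (by omega)
      hr2 hr1 i2 i1
      (Or.inr ⟨Fin.lt_def.mp hpq, Fin.lt_def.mp hqp', Fin.lt_def.mp hp'q'⟩)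

end main

section pairsec
variable {n m : ℕ} {h2 : 0 < 2 * n * m} {Φ : Fin n → Setoid (Fin m)}

theorem qmap_star : ∀ p q : Fin (2*n*m), p ≠ q → (QMap n m h2 Φ).r p q →
    (IsCPos n p.val ↔ ¬ IsCPos n q.val) := by
  intro p q hne h
  rcases qmap_cases h with rfl | hq | hq
  · exact absurd rfl hne
  · obtain ⟨j, k, k', _, hp, hq'⟩ := qrel_val hq
    rw [hp, hq']
    exact iff_of_true (isCPos_cval (by omega) j.isLt) (not_isCPos_sval (by omega) j.isLt)
  · obtain ⟨j, k, k', _, hq', hp⟩ := qrel_val hq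
    rw [hp, hq']
    exact iff_of_false (not_isCPos_sval (by omega) j.isLt)
      (not_not_intro (isCPos_cval (by omega) j.isLt))

theorem qmap_pair (hn : 1 ≤ n) (hm : 1 ≤ m) : IsPairPartition (QMap n m h2 Φ) := by
  intro p
  have hn0 : 0 < n := hn
  set d := p.val / n with hdd
  set r := p.val % n with hrr
  have hr : r < n := Nat.mod_lt _ hn0
  have hpd : p.val = d * n + r := by
    have h := Nat.div_add_mod p.val n
    rw [← hdd, ← hrr] at h
    have e : n * d = d * n := Nat.mul_comm n d
    omega
  have hd2m : d < 2 * m := by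
    have := p.isLt
    have e : 2 * n * m = (2 * m) * n := by ring
    have e2 : n * (2 * m) = 2 * n * m := by ring
    rw [hdd]
    exact Nat.div_lt_of_lt_mul (by omega)
  rcases Nat.even_or_odd d with ⟨k, hk⟩ | ⟨k, hk⟩
  · -- c-position: d = 2k
    have hkm : k < m := by omega
    have hj : n - 1 - r < n := by omega
    set j : ℕ := n - 1 - r with hjj
    have hpval : p.val = cval n k (j + 1) := by
      have e : d * n = 2 * k * n := by rw [hk]; ring
      unfold cval
      omega
    have hp : p = cIdx n m h2 (k+1) (j+1) :=
      Fin.ext (by rw [cIdx_val h2 hkm hj]; exact hpval)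
    obtain ⟨k', hk'⟩ := cycPred_exists (Φ ⟨j, hj⟩) ⟨k, hkm⟩
    have hrel : QRel n m h2 Φ p (cstarIdx n m h2 (k'.val+1) (j+1)) :=
      ⟨⟨j, hj⟩, ⟨k, hkm⟩, k', hk', hp, rfl⟩
    have hqv : (cstarIdx n m h2 (k'.val+1) (j+1)).val = sval n k'.val (j+1) :=
      cstarIdx_val h2 k'.isLt hj
    refine ⟨cstarIdx n m h2 (k'.val+1) (j+1), ⟨?_, Relation.EqvGen.rel _ _ hrel⟩, ?_⟩
    · intro heq
      have : cval n k (j+1) = sval n k'.val (j+1) := by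
        rw [← hpval, ← hqv, heq]
      exact myCsNe this (by omega) (by omega) (by omega) (by omega)
    · rintro y ⟨hy1, hy2⟩
      rcases qmap_cases hy2 with heq | hq | hq
      · exact absurd heq.symm hy1
      · exact qrel_right_unique hq hrel
      · obtain ⟨j2, k2, k2', _, _, hps⟩ := qrel_val hq
        exact (myCsNe (hpval.symm.trans hps) (by omega) (by omega) (by omega) j2.isLt).elim
  · -- c*-position: d = 2k+1
    have hkm : k < m := by omega
    have hj : r < n := hr
    set j : ℕ := r with hjj
    have hpval : p.val = sval n k (j + 1) := by
      have e : d * n = (2 * k + 1) * n := by rw [hk]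
      unfold sval
      omega
    have hp : p = cstarIdx n m h2 (k+1) (j+1) :=
      Fin.ext (by rw [cstarIdx_val h2 hkm hj]; exact hpval)
    obtain ⟨k0, hk0⟩ := cycPred_surj (Φ ⟨j, hj⟩) ⟨k, hkm⟩
    have hrel : QRel n m h2 Φ (cIdx n m h2 (k0.val+1) (j+1)) p :=
      ⟨⟨j, hj⟩, k0, ⟨k, hkm⟩, hk0, rfl, hp⟩
    have hqv : (cIdx n m h2 (k0.val+1) (j+1)).val = cval n k0.val (j+1) :=
      cIdx_val h2 k0.isLt hj
    refine ⟨cIdx n m h2 (k0.val+1) (j+1),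
      ⟨?_, Relation.EqvGen.symm _ _ (Relation.EqvGen.rel _ _ hrel)⟩, ?_⟩
    · intro heq
      have : cval n k0.val (j+1) = sval n k (j+1) := by
        rw [← hpval, ← hqv, heq]
      exact myCsNe this (by omega) (by omega) (by omega) (by omega)
    · rintro y ⟨hy1, hy2⟩
      rcases qmap_cases hy2 with heq | hq | hq
      · exact absurd heq.symm hy1
      · obtain ⟨j2, k2, k2', _, hpc, _⟩ := qrel_val hq
        exact (myCsNe (hpc.symm.trans hpval) (by omega) j2.isLt (by omega) (by omega)).elim
      · exact qrel_left_unique hq hrel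

end pairsec

/-- Given a multichain `Φ₁ ≤ ⋯ ≤ Φₙ` of noncrossing partitions of `{1,…,m}`, the
pairing `Q(Φ₁,…,Φₙ)` is a noncrossing ∗-pairing, i.e. lies in `NC₂*(n,m)`. -/
theorem qMap_mem_starPairing (n m : ℕ) (hn : 1 ≤ n) (hm : 1 ≤ m)
    (h2 : 0 < 2 * n * m)
    (Φ : Fin n → Setoid (Fin m))
    (hNC : ∀ j, IsNoncrossing (Φ j)) (hchain : Monotone Φ) :
    IsStarPairing n m (QMap n m h2 Φ) := by
  exact ⟨qmap_noncrossing hNC hchain, qmap_pair hn hm, fun p q => qmap_star p q⟩
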